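/- If f : ℝⁿ → ℝ is convex, twice continuously differentiable, 1-coercive, and ∇²f(x) is positive definite for all x, then f* is also convex, twice differentiable, 1-coercive with positive definite Hessian everywhere, and ∇²f*(y) = [∇²f((∇f)⁻¹(y))]⁻¹ for all y ∈ ℝⁿ. -/

import Mathlib

open Filter Set RealInnerProductSpace
open Topology

noncomputable def fenchel {n : ℕ} (f : EuclideanSpace ℝ (Fin n) → ℝ)
    (y : EuclideanSpace ℝ (Fin n)) : ℝ :=
  sSup (Set.range fun x => ⟪y, x⟫ - f x)

def Coercive1 {n : ℕ} (f : EuclideanSpace ℝ (Fin n) → ℝ) : Prop :=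
  Tendsto (fun x => f x / ‖x‖) (Filter.comap norm Filter.atTop) Filter.atTop

section aux
variable {n : ℕ}
local notation "E" => EuclideanSpace ℝ (Fin n)


lemma fprime_inj {f' : E → E} {f'' : E → E →L[ℝ] E}
    (hdiff2 : ∀ x, HasFDerivAt f' (f'' x) x)
    (hpos : ∀ x v, v ≠ 0 → 0 < ⟪v, f'' x v⟫) :
    Function.Injective f' := by
  intro x z h
  by_contra hxz
  set v := z - x with hv
  have hvne : v ≠ 0 := sub_ne_zero.2 (Ne.symm hxz)
  set φ : ℝ → ℝ := fun t => ⟪f' (x + t • v), v⟫ with hφ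
  have hφd : ∀ t, HasDerivAt φ ⟪f'' (x + t • v) v, v⟫ t := by
    intro t
    have hline : HasDerivAt (fun s : ℝ => x + s • v) v t := by
      simpa using ((hasDerivAt_id t).smul_const v).const_add x
    have h1 : HasDerivAt (fun s : ℝ => f' (x + s • v)) (f'' (x + t • v) v) t :=
      (hdiff2 _).comp_hasDerivAt t hline
    have h2 := h1.inner ℝ (hasDerivAt_const t v)
    simpa using h2
  have hmono : StrictMono φ := by
    apply strictMono_of_deriv_pos
    intro t
    rw [(hφd t).deriv]
    rw [real_inner_comm]
    exact hpos _ v hvne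
  have h01 := hmono (zero_lt_one)
  have e0 : φ 0 = ⟪f' x, v⟫ := by simp [hφ]
  have e1 : φ 1 = ⟪f' z, v⟫ := by simp [hφ, hv]
  rw [e0, e1, h] at h01
  exact lt_irrefl _ h01

lemma exists_argmax {f : E → ℝ} (f' : E → E)
    (hdiff : ∀ x, HasGradientAt f (f' x) x)
    (hcoer : Tendsto (fun x : E => f x / ‖x‖) (Filter.comap norm Filter.atTop) Filter.atTop)
    (y : E) :
    ∃ x : E, f' x = y ∧ ∀ z : E, ⟪y, z⟫ - f z ≤ ⟪y, x⟫ - f x := by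
  have hfc : Continuous f := by
    rw [continuous_iff_continuousAt]
    exact fun x => (hdiff x).differentiableAt.continuousAt
  have hc : Continuous (fun z : E => f z - ⟪y, z⟫) :=
    hfc.sub ((continuous_const.inner continuous_id))
  have hco' : Tendsto (fun x : E => f x - ⟪y, x⟫) (comap norm atTop) atTop := by
    rw [tendsto_atTop]
    intro b
    have h1 : ∀ᶠ x : E in comap norm atTop, ‖y‖ + |b| ≤ f x / ‖x‖ :=
      hcoer.eventually (eventually_ge_atTop _)
    have h2 : ∀ᶠ x : E in comap norm atTop, (1:ℝ) ≤ ‖x‖ :=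
      preimage_mem_comap (Ici_mem_atTop 1)
    filter_upwards [h1, h2] with x hx1 hx2
    have hr : (0:ℝ) < ‖x‖ := lt_of_lt_of_le one_pos hx2
    have hfx : (‖y‖ + |b|) * ‖x‖ ≤ f x := (le_div_iff₀ hr).1 hx1
    have hin : ⟪y, x⟫ ≤ ‖y‖ * ‖x‖ := real_inner_le_norm y x
    nlinarith [abs_nonneg b, le_abs_self b]
  have hco : Tendsto (fun x : E => f x - ⟪y, x⟫) (cocompact E) atTop :=
    hco'.mono_left (tendsto_iff_comap.mp tendsto_norm_cocompact_atTop)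
  obtain ⟨x₀, hx₀⟩ := hc.exists_forall_le hco
  refine ⟨x₀, ?_, fun z => by linarith [hx₀ z]⟩
  have hmin : IsLocalMin (fun z : E => f z - ⟪y, z⟫) x₀ :=
    Filter.Eventually.of_forall hx₀
  have hinr : HasFDerivAt (fun z : E => ⟪y, z⟫) (innerSL ℝ y) x₀ :=
    (innerSL ℝ y).hasFDerivAt
  have hfd : HasFDerivAt (fun z : E => f z - ⟪y, z⟫)
      (InnerProductSpace.toDual ℝ _ (f' x₀) - innerSL ℝ y) x₀ :=
    (hdiff x₀).hasFDerivAt.sub hinr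
  have h0 := hmin.fderiv_eq_zero
  rw [hfd.fderiv] at h0
  have hz : ∀ v : E, ⟪f' x₀ - y, v⟫ = 0 := by
    intro v
    have := congrFun (congrArg (DFunLike.coe) h0) v
    simp [InnerProductSpace.toDual_apply_apply, inner_sub_left] at this ⊢
    exact this
  have := hz (f' x₀ - y)
  rw [inner_self_eq_zero] at this
  exact sub_eq_zero.1 this


lemma f''_bij {f'' : E → E →L[ℝ] E}
    (hpos : ∀ x v, v ≠ 0 → 0 < ⟪v, f'' x v⟫) (x : E) :
    Function.Bijective (f'' x) := by
  have hinj : Function.Injective (f'' x) := by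
    intro v w h
    by_contra hne
    have hvw : v - w ≠ 0 := sub_ne_zero.2 hne
    have h0 : f'' x (v - w) = 0 := by rw [map_sub, h, sub_self]
    have := hpos x (v - w) hvw
    rw [h0, inner_zero_right] at this
    exact lt_irrefl _ this
  exact ⟨hinj, LinearMap.injective_iff_surjective.1 hinj⟩

noncomputable def f''equiv {f'' : E → E →L[ℝ] E}
    (hpos : ∀ x v, v ≠ 0 → 0 < ⟪v, f'' x v⟫) (x : E) : E ≃L[ℝ] E :=
  (LinearEquiv.ofBijective ((f'' x) : E →ₗ[ℝ] E) (f''_bij hpos x)).toContinuousLinearEquiv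

lemma f''equiv_coe {f'' : E → E →L[ℝ] E}
    (hpos : ∀ x v, v ≠ 0 → 0 < ⟪v, f'' x v⟫) (x : E) :
    ((f''equiv hpos x : E →L[ℝ] E) : E → E) = f'' x := rfl

lemma invfun_deriv {f' : E → E} {f'' : E → E →L[ℝ] E}
    (hdiff2 : ∀ x, HasFDerivAt f' (f'' x) x)
    (hcont : Continuous f'')
    (hpos : ∀ x v, v ≠ 0 → 0 < ⟪v, f'' x v⟫)
    (hinj : Function.Injective f') (x : E) :
    HasFDerivAt (Function.invFun f') ((f''equiv hpos x).symm : E →L[ℝ] E) (f' x) := by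
  have hC1 : ContDiff ℝ 1 f' := by
    rw [contDiff_one_iff_fderiv]
    refine ⟨fun z => (hdiff2 z).differentiableAt, ?_⟩
    have hfd : fderiv ℝ f' = f'' := funext fun z => (hdiff2 z).fderiv
    rw [hfd]; exact hcont
  have hstrict : HasStrictFDerivAt f' ((f''equiv hpos x : E ≃L[ℝ] E) : E →L[ℝ] E) x := by
    have h1 := (hC1.contDiffAt (x := x)).hasStrictFDerivAt one_ne_zero
    refine h1.congr_fderiv ?_
    rw [(hdiff2 x).fderiv]
    exact ContinuousLinearMap.ext fun v => rfl
  have hloc := hstrict.to_localInverse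
  have hev : ∀ᶠ z in 𝓝 (f' x),
      Function.invFun f' z = hstrict.localInverse f' _ x z :=
    hstrict.localInverse_unique
      (Filter.Eventually.of_forall fun w => Function.leftInverse_invFun hinj w)
  exact hloc.hasFDerivAt.congr_of_eventuallyEq hev

end aux

theorem stmt6 {n : ℕ} (f : EuclideanSpace ℝ (Fin n) → ℝ)
    (f' : EuclideanSpace ℝ (Fin n) → EuclideanSpace ℝ (Fin n))
    (f'' : EuclideanSpace ℝ (Fin n) → EuclideanSpace ℝ (Fin n) →L[ℝ] EuclideanSpace ℝ (Fin n))
    (hconv : ConvexOn ℝ Set.univ f)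
    (hdiff : ∀ x, HasGradientAt f (f' x) x)
    (hdiff2 : ∀ x, HasFDerivAt f' (f'' x) x)
    (hcont : Continuous f'')
    (hcoer : Coercive1 f)
    (hpos : ∀ x v, v ≠ 0 → 0 < ⟪v, f'' x v⟫) :
    ConvexOn ℝ Set.univ (fenchel f) ∧ Coercive1 (fenchel f) ∧
    ∃ (g : EuclideanSpace ℝ (Fin n) → EuclideanSpace ℝ (Fin n))
      (g'' : EuclideanSpace ℝ (Fin n) → EuclideanSpace ℝ (Fin n) →L[ℝ] EuclideanSpace ℝ (Fin n)),
      (∀ y, HasGradientAt (fenchel f) (g y) y) ∧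
      (∀ y, HasFDerivAt g (g'' y) y) ∧
      (∀ y v, v ≠ 0 → 0 < ⟪v, g'' y v⟫) ∧
      (∀ y v, f'' (Function.invFun f' y) (g'' y v) = v) ∧
      (∀ y v, g'' y (f'' (Function.invFun f' y) v) = v) := by
  have hinj : Function.Injective f' := fprime_inj hdiff2 hpos
  have hargmax := exists_argmax f' hdiff hcoer
  have hsurj : Function.Surjective f' := fun y => ⟨(hargmax y).choose, (hargmax y).choose_spec.1⟩
  set g : EuclideanSpace ℝ (Fin n) → EuclideanSpace ℝ (Fin n) := Function.invFun f' with hgdef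
  have hgf : ∀ x, g (f' x) = x := fun x => Function.leftInverse_invFun hinj x
  have hfg : ∀ y, f' (g y) = y := fun y => Function.invFun_eq (hsurj y)
  -- upper bound and formula
  have hub : ∀ y z : EuclideanSpace ℝ (Fin n), ⟪y, z⟫ - f z ≤ fenchel f y := by
    intro y z
    obtain ⟨x, hx1, hx2⟩ := hargmax y
    have hgr : IsGreatest (Set.range fun x' : EuclideanSpace ℝ (Fin n) => ⟪y, x'⟫ - f x') (⟪y, x⟫ - f x) :=
      ⟨⟨x, rfl⟩, by rintro w ⟨z', rfl⟩; exact hx2 z'⟩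
    rw [fenchel, hgr.csSup_eq]
    exact hx2 z
  have hformula : ∀ y : EuclideanSpace ℝ (Fin n), fenchel f y = ⟪y, g y⟫ - f (g y) := by
    intro y
    obtain ⟨x, hx1, hx2⟩ := hargmax y
    have hgy : g y = x := by rw [← hx1, hgf]
    have hgr : IsGreatest (Set.range fun x' : EuclideanSpace ℝ (Fin n) => ⟪y, x'⟫ - f x') (⟪y, x⟫ - f x) :=
      ⟨⟨x, rfl⟩, by rintro w ⟨z', rfl⟩; exact hx2 z'⟩
    rw [fenchel, hgr.csSup_eq, hgy]
  have hfc : Continuous f := by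
    rw [continuous_iff_continuousAt]
    exact fun x => (hdiff x).differentiableAt.continuousAt
  refine ⟨?_, ?_, ?_⟩
  · -- convexity
    refine ⟨convex_univ, fun y _ z _ a b ha hb hab => ?_⟩
    have hle : fenchel f (a • y + b • z) ≤ a * fenchel f y + b * fenchel f z := by
      rw [fenchel]
      apply csSup_le (Set.range_nonempty _)
      rintro w ⟨x, rfl⟩
      have h1 := hub y x
      have h2 := hub z x
      have hin : ⟪a • y + b • z, x⟫ = a * ⟪y, x⟫ + b * ⟪z, x⟫ := by
        rw [inner_add_left, real_inner_smul_left, real_inner_smul_left]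
      have heq : ⟪a • y + b • z, x⟫ - f x = a * (⟪y, x⟫ - f x) + b * (⟪z, x⟫ - f x) := by
        rw [hin]; linear_combination (f x) * hab
      show ⟪a • y + b • z, x⟫ - f x ≤ a * fenchel f y + b * fenchel f z
      rw [heq]
      have := add_le_add (mul_le_mul_of_nonneg_left h1 ha) (mul_le_mul_of_nonneg_left h2 hb)
      linarith
    simpa [smul_eq_mul] using hle
  · -- coercivity
    rw [Coercive1, tendsto_atTop]
    intro b
    set R : ℝ := |b| + 1 with hR
    have hRpos : 0 < R := by positivity
    obtain ⟨xm, _, hxm⟩ := (isCompact_closedBall (0:EuclideanSpace ℝ (Fin n)) R).exists_isMaxOn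
      ⟨0, by simp [hRpos.le]⟩ hfc.continuousOn
    set M := f xm with hM
    replace hxm : ∀ z ∈ Metric.closedBall (0:EuclideanSpace ℝ (Fin n)) R, f z ≤ M := hxm
    have hmem : {y : EuclideanSpace ℝ (Fin n) | max 1 |M| ≤ ‖y‖} ∈ comap (norm : EuclideanSpace ℝ (Fin n) → ℝ) atTop :=
      preimage_mem_comap (Ici_mem_atTop _)
    filter_upwards [hmem] with y hy
    have hy1 : (1:ℝ) ≤ ‖y‖ := le_trans (le_max_left _ _) hy
    have hyM : |M| ≤ ‖y‖ := le_trans (le_max_right _ _) hy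
    have hy0 : (0:ℝ) < ‖y‖ := lt_of_lt_of_le one_pos hy1
    set x : EuclideanSpace ℝ (Fin n) := (R / ‖y‖) • y with hx
    have hxnorm : ‖x‖ = R := by
      rw [hx, norm_smul, Real.norm_eq_abs, abs_of_pos (div_pos hRpos hy0),
        div_mul_cancel₀ _ (ne_of_gt hy0)]
    have hfxM : f x ≤ M := hxm x (by simp [Metric.mem_closedBall, hxnorm])
    have hinner : ⟪y, x⟫ = R * ‖y‖ := by
      rw [hx, real_inner_smul_right, real_inner_self_eq_norm_mul_norm]
      field_simp
    have hF := hub y x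
    rw [le_div_iff₀ hy0]
    rw [hinner] at hF
    nlinarith [le_abs_self M, le_abs_self b, abs_nonneg b]
  · -- differentiability
    refine ⟨g, fun y => ((f''equiv hpos (g y)).symm : EuclideanSpace ℝ (Fin n) →L[ℝ] EuclideanSpace ℝ (Fin n)), ?_, ?_, ?_, ?_, ?_⟩
    · -- gradient
      intro y
      have h2 : HasFDerivAt g (((f''equiv hpos (g y)).symm : EuclideanSpace ℝ (Fin n) →L[ℝ] EuclideanSpace ℝ (Fin n))) y := by
        have := invfun_deriv hdiff2 hcont hpos hinj (g y)
        rwa [hfg y] at this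
      have h1 : HasFDerivAt (fun z : EuclideanSpace ℝ (Fin n) => z) (ContinuousLinearMap.id ℝ (EuclideanSpace ℝ (Fin n))) y := hasFDerivAt_id y
      have hinner := h1.inner ℝ h2
      have hcomp : HasFDerivAt (fun z : EuclideanSpace ℝ (Fin n) => f (g z))
          ((InnerProductSpace.toDual ℝ (EuclideanSpace ℝ (Fin n)) (f' (g y))).comp
            (((f''equiv hpos (g y)).symm : EuclideanSpace ℝ (Fin n) →L[ℝ] EuclideanSpace ℝ (Fin n)))) y :=
        (hdiff (g y)).hasFDerivAt.comp y h2
      have hsub := hinner.sub hcomp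
      have hclm : ((fderivInnerCLM ℝ (y, g y)).comp
            ((ContinuousLinearMap.id ℝ (EuclideanSpace ℝ (Fin n))).prod (((f''equiv hpos (g y)).symm : EuclideanSpace ℝ (Fin n) →L[ℝ] EuclideanSpace ℝ (Fin n)))) -
          (InnerProductSpace.toDual ℝ (EuclideanSpace ℝ (Fin n)) (f' (g y))).comp
            (((f''equiv hpos (g y)).symm : EuclideanSpace ℝ (Fin n) →L[ℝ] EuclideanSpace ℝ (Fin n))))
          = InnerProductSpace.toDual ℝ (EuclideanSpace ℝ (Fin n)) (g y) := by
        refine ContinuousLinearMap.ext fun v => ?_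
        simp only [ContinuousLinearMap.sub_apply, ContinuousLinearMap.comp_apply,
          ContinuousLinearMap.prod_apply, ContinuousLinearMap.coe_id', id_eq,
          fderivInnerCLM_apply, InnerProductSpace.toDual_apply_apply, hfg y]
        rw [real_inner_comm v (g y)]
        ring
      have hfin : HasFDerivAt (fun z : EuclideanSpace ℝ (Fin n) => ⟪z, g z⟫ - f (g z))
          (InnerProductSpace.toDual ℝ (EuclideanSpace ℝ (Fin n)) (g y)) y := by
        rw [← hclm]; exact hsub
      have hFeq : fenchel f = fun z : EuclideanSpace ℝ (Fin n) => ⟪z, g z⟫ - f (g z) := funext hformula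
      rw [hasGradientAt_iff_hasFDerivAt, hFeq]
      exact hfin
    · -- derivative of g
      intro y
      have := invfun_deriv hdiff2 hcont hpos hinj (g y)
      rwa [hfg y] at this
    · -- positivity
      intro y v hv
      set w : EuclideanSpace ℝ (Fin n) := ((f''equiv hpos (g y)).symm : EuclideanSpace ℝ (Fin n) →L[ℝ] EuclideanSpace ℝ (Fin n)) v with hw
      have hvw : f'' (g y) w = v := (f''equiv hpos (g y)).apply_symm_apply v
      have hwne : w ≠ 0 := by
        intro h0
        rw [h0, map_zero] at hvw
        exact hv hvw.symm
      have hcalc : ⟪v, ((f''equiv hpos (g y)).symm : EuclideanSpace ℝ (Fin n) →L[ℝ] EuclideanSpace ℝ (Fin n)) v⟫ = ⟪w, f'' (g y) w⟫ := by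
        rw [← hw, ← hvw, real_inner_comm]
      rw [hcalc]
      exact hpos _ w hwne
    · intro y v
      exact (f''equiv hpos (g y)).apply_symm_apply v
    · intro y v
      exact (f''equiv hpos (g y)).symm_apply_apply v
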